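/- Let A > B ≥ 0 with A + B > 0, and define F(r) = log((√(B+A) + √(A−r))/√(B+r)) for −B < r < A. Then at r₀ = (2A−B)/3 and t₀ = 3√3/(4(A+B)) the gradient catastrophe conditions hold: t₀ + F'(r₀) = 0 and F''(r₀) = 0. Moreover F'''(r₀) = −81√3/(16(A+B)³). -/

import Mathlib

/-- Gradient catastrophe point for quintic defocusing NLS with
`u₀ = A sech²x`, `v₀ = −B tanh²x`: at `r₀ = (2A−B)/3`, `t₀ = 3√3/(4(A+B))`,
one has `t₀ + F'(r₀) = 0`, `F''(r₀) = 0`, and `F'''(r₀) = −81√3/(16(A+B)³)`. -/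
theorem stmt7 (A B : ℝ) (hAB : B < A) (hB : 0 ≤ B) (hsum : 0 < A + B)
    (F : ℝ → ℝ)
    (hF : F = fun r =>
      Real.log ((Real.sqrt (B + A) + Real.sqrt (A - r)) / Real.sqrt (B + r))) :
    3 * Real.sqrt 3 / (4 * (A + B)) + deriv F ((2 * A - B) / 3) = 0 ∧
    deriv (deriv F) ((2 * A - B) / 3) = 0 ∧
    deriv (deriv (deriv F)) ((2 * A - B) / 3) = -81 * Real.sqrt 3 / (16 * (A + B) ^ 3) := by
  subst hF
  set c : ℝ := Real.sqrt (B + A) with hcdef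
  set G : ℝ → ℝ := fun r => -c / (2 * Real.sqrt (A - r) * (B + r)) with hGdef
  set G₂ : ℝ → ℝ := fun r =>
    c * (2 * Real.sqrt (A - r) - (B + r) / Real.sqrt (A - r)) /
      (2 * Real.sqrt (A - r) * (B + r)) ^ 2 with hG2def
  have hc : 0 < c := Real.sqrt_pos.2 (by linarith)
  have hc2 : c ^ 2 = B + A := Real.sq_sqrt (by linarith)
  have hr0 : (2 * A - B) / 3 ∈ Set.Ioo (-B) A := by
    constructor <;> [linarith; linarith]
  -- generic facts for r in the interval
  have key : ∀ r ∈ Set.Ioo (-B) A,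
      HasDerivAt (fun r => Real.log ((Real.sqrt (B + A) + Real.sqrt (A - r)) / Real.sqrt (B + r)))
        (G r) r := by
    intro r hr
    have hA : 0 < A - r := by linarith [hr.2]
    have hBr : 0 < B + r := by linarith [hr.1]
    have ha : 0 < Real.sqrt (A - r) := Real.sqrt_pos.2 hA
    have hb : 0 < Real.sqrt (B + r) := Real.sqrt_pos.2 hBr
    have ha2 : Real.sqrt (A - r) ^ 2 = A - r := Real.sq_sqrt hA.le
    have hb2 : Real.sqrt (B + r) ^ 2 = B + r := Real.sq_sqrt hBr.le
    have h1 : HasDerivAt (fun x : ℝ => A - x) (-1) r := by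
      simpa using (hasDerivAt_id r).const_sub A
    have h2 : HasDerivAt (fun x : ℝ => B + x) 1 r := by
      simpa using (hasDerivAt_id r).const_add B
    have hs1 : HasDerivAt (fun x : ℝ => Real.sqrt (A - x)) (-1 / (2 * Real.sqrt (A - r))) r :=
      h1.sqrt (ne_of_gt hA)
    have hs2 : HasDerivAt (fun x : ℝ => Real.sqrt (B + x)) (1 / (2 * Real.sqrt (B + r))) r :=
      h2.sqrt (ne_of_gt hBr)
    have htop : HasDerivAt (fun x : ℝ => Real.sqrt (B + A) + Real.sqrt (A - x))
        (-1 / (2 * Real.sqrt (A - r))) r := hs1.const_add _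
    have hdiv := htop.div hs2 (ne_of_gt hb)
    have hpos : 0 < (Real.sqrt (B + A) + Real.sqrt (A - r)) / Real.sqrt (B + r) := by positivity
    have hlog := hdiv.log (ne_of_gt hpos)
    refine hlog.congr_deriv ?_
    symm
    simp only [Pi.div_apply]
    rw [hGdef]
    have hca : 0 < c + Real.sqrt (A - r) := by positivity
    field_simp
    linear_combination (-c*Real.sqrt (A-r) - c^2) * hb2 + (-(B+r)) * (hc2 - ha2 - hb2)
  have key2 : ∀ r ∈ Set.Ioo (-B) A, HasDerivAt G (G₂ r) r := by
    intro r hr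
    have hA : 0 < A - r := by linarith [hr.2]
    have hBr : 0 < B + r := by linarith [hr.1]
    have ha : 0 < Real.sqrt (A - r) := Real.sqrt_pos.2 hA
    have ha2 : Real.sqrt (A - r) ^ 2 = A - r := Real.sq_sqrt hA.le
    have h1 : HasDerivAt (fun x : ℝ => A - x) (-1) r := by
      simpa using (hasDerivAt_id r).const_sub A
    have h2 : HasDerivAt (fun x : ℝ => B + x) 1 r := by
      simpa using (hasDerivAt_id r).const_add B
    have hs1 : HasDerivAt (fun x : ℝ => Real.sqrt (A - x)) (-1 / (2 * Real.sqrt (A - r))) r :=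
      h1.sqrt (ne_of_gt hA)
    have hD : HasDerivAt (fun x : ℝ => 2 * Real.sqrt (A - x) * (B + x))
        ((2 * (-1 / (2 * Real.sqrt (A - r)))) * (B + r) + (2 * Real.sqrt (A - r)) * 1) r :=
      (hs1.const_mul 2).mul h2
    have hDne : 2 * Real.sqrt (A - r) * (B + r) ≠ 0 := by positivity
    have hGd := (hasDerivAt_const r (-c)).div hD hDne
    refine hGd.congr_deriv ?_
    symm
    rw [hG2def]
    field_simp
    ring
  have hA0 : A - (2 * A - B) / 3 = (A + B) / 3 := by ring
  have hB0 : B + (2 * A - B) / 3 = 2 * (A + B) / 3 := by ring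
  set a₀ : ℝ := Real.sqrt ((A + B) / 3) with ha₀def
  have ha₀ : 0 < a₀ := Real.sqrt_pos.2 (by linarith)
  have ha₀2 : a₀ ^ 2 = (A + B) / 3 := Real.sq_sqrt (by linarith)
  clear_value a₀
  have ht : Real.sqrt 3 ^ 2 = 3 := Real.sq_sqrt (by norm_num)
  have ht0 : (0:ℝ) < Real.sqrt 3 := Real.sqrt_pos.2 (by norm_num)
  have hca : c = Real.sqrt 3 * a₀ := by
    have hz : (Real.sqrt 3 * a₀ - c) * (Real.sqrt 3 * a₀ + c) = 0 := by
      have : Real.sqrt 3 ^ 2 * a₀ ^ 2 - c ^ 2 = 0 := by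
        rw [ht, ha₀2, hc2]; ring
      nlinarith [this]
    rcases mul_eq_zero.1 hz with h | h
    · linarith
    · nlinarith
  have hev : ∀ x ∈ Set.Ioo (-B) A,
      deriv (fun r => Real.log ((Real.sqrt (B + A) + Real.sqrt (A - r)) / Real.sqrt (B + r)))
        =ᶠ[nhds x] G := fun x hx =>
    Filter.eventuallyEq_of_mem (isOpen_Ioo.mem_nhds hx) (fun y hy => (key y hy).deriv)
  refine ⟨?_, ?_, ?_⟩
  · rw [(key _ hr0).deriv, hGdef]
    simp only
    rw [hA0, hB0, ← ha₀def, hca]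
    field_simp
    ring
  · rw [(hev _ hr0).deriv_eq, (key2 _ hr0).deriv, hG2def]
    simp only
    rw [hA0, hB0, ← ha₀def]
    have hnum : 2 * a₀ - 2 * (A + B) / 3 / a₀ = 0 := by
      field_simp
      linear_combination 6 * ha₀2
    rw [hnum]
    simp
  · have key3 : ∀ x ∈ Set.Ioo (-B) A,
        deriv (deriv (fun r => Real.log ((Real.sqrt (B + A) + Real.sqrt (A - r)) / Real.sqrt (B + r)))) x
          = G₂ x := fun x hx => by
      rw [(hev x hx).deriv_eq, (key2 x hx).deriv]
    have hev3 : deriv (deriv (fun r => Real.log ((Real.sqrt (B + A) + Real.sqrt (A - r)) / Real.sqrt (B + r))))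
        =ᶠ[nhds ((2 * A - B) / 3)] G₂ :=
      Filter.eventuallyEq_of_mem (isOpen_Ioo.mem_nhds hr0) key3
    rw [hev3.deriv_eq]
    have hA : 0 < A - (2 * A - B) / 3 := by rw [hA0]; linarith
    have hBr : 0 < B + (2 * A - B) / 3 := by rw [hB0]; linarith
    have ha : 0 < Real.sqrt (A - (2 * A - B) / 3) := Real.sqrt_pos.2 hA
    have h1 : HasDerivAt (fun x : ℝ => A - x) (-1) ((2 * A - B) / 3) := by
      simpa using (hasDerivAt_id _).const_sub A
    have h2 : HasDerivAt (fun x : ℝ => B + x) 1 ((2 * A - B) / 3) := by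
      simpa using (hasDerivAt_id _).const_add B
    have hs1 : HasDerivAt (fun x : ℝ => Real.sqrt (A - x))
        (-1 / (2 * Real.sqrt (A - (2 * A - B) / 3))) ((2 * A - B) / 3) := h1.sqrt (ne_of_gt hA)
    have hN := (hs1.const_mul 2).sub (h2.div hs1 (ne_of_gt ha))
    have hD := (hs1.const_mul 2).mul h2
    have hD2 := hD.pow 2
    have hne : (2 * Real.sqrt (A - (2 * A - B) / 3) * (B + (2 * A - B) / 3)) ^ 2 ≠ 0 := by
      positivity
    have hfinal := (hN.const_mul c).div hD2 hne
    rw [hG2def, (show HasDerivAt (fun r => c * (2 * Real.sqrt (A - r) - (B + r) / Real.sqrt (A - r)) /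
        (2 * Real.sqrt (A - r) * (B + r)) ^ 2) _ ((2 * A - B) / 3) from hfinal).deriv]
    simp only [Pi.mul_apply, Pi.pow_apply, Pi.sub_apply, Pi.div_apply]
    rw [hA0, hB0, ← ha₀def, hca, show A + B = 3 * a₀ ^ 2 by linarith [ha₀2]]
    have h3 : Real.sqrt 3 ^ 2 = 3 := ht
    field_simp
    ring_nf
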